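/- Let Z₁, …, Z_{r₂} be i.i.d. exponential random variables with rate a > 0 (mean 1/a), and let Z̄ := (1/r₂)·Σ_{j=1}^{r₂} Z_j. Then for every ε₂ with 0 < ε₂ ≤ 1, P( (1−ε₂)·a ≤ 1/Z̄ ≤ (1+ε₂)·a ) ≥ 1 − 2·exp(−ε₂²·r₂/12). -/

import Mathlib

open MeasureTheory ProbabilityTheory Finset

section Aux

lemma exp_cubic_bound {x : ℝ} (h0 : 0 ≤ x) (h1 : x ≤ 1) :
    Real.exp x ≤ 1 + x + x^2/2 + x^3 * (2/9) := by
  have h := Real.exp_bound (x := x) (by rw [abs_of_nonneg h0]; exact h1) (n := 3) (by norm_num)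
  have hs : ∑ i ∈ Finset.range 3, x ^ i / (Nat.factorial i) = 1 + x + x^2/2 := by
    norm_num [Finset.sum_range_succ, Nat.factorial]
  rw [hs, abs_of_nonneg h0] at h
  have h2 := (abs_le.mp h).2
  norm_num [Nat.factorial] at h2
  nlinarith [h2]

lemma scalar1 {ε : ℝ} (h0 : 0 < ε) (h1 : ε ≤ 1) :
    Real.exp (ε/(1+ε) + ε^2/12) ≤ 1 + ε := by
  have hu : (0:ℝ) < 1 + ε := by linarith
  set x := ε/(1+ε) + ε^2/12 with hx
  have hx0 : 0 ≤ x := by positivity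
  have hx1 : x ≤ 1 := by
    rw [hx]
    have h2 : ε/(1+ε) ≤ 1/2 := by
      rw [div_le_div_iff₀ hu (by norm_num)]; linarith
    nlinarith
  refine (exp_cubic_bound hx0 hx1).trans ?_
  have hxq : x = (12*ε+ε^2+ε^3)/(12*(1+ε)) := by
    rw [hx]; field_simp; ring
  have key : 18*(12*ε+ε^2+ε^3)*(12*(1+ε))^2 + 9*(12*ε+ε^2+ε^3)^2*(12*(1+ε))
      + 4*(12*ε+ε^2+ε^3)^3 ≤ 18*ε*(12*(1+ε))^3 := by
    have p3 : ε^3 ≤ ε^2 := pow_le_pow_of_le_one h0.le h1 (by norm_num)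
    have p4 : ε^4 ≤ ε^2 := pow_le_pow_of_le_one h0.le h1 (by norm_num)
    have p5 : ε^5 ≤ ε^2 := pow_le_pow_of_le_one h0.le h1 (by norm_num)
    have p6 : ε^6 ≤ ε^2 := pow_le_pow_of_le_one h0.le h1 (by norm_num)
    have p7 : ε^7 ≤ ε^2 := pow_le_pow_of_le_one h0.le h1 (by norm_num)
    have p2 : 0 ≤ ε^2 := sq_nonneg ε
    have p3' : 0 ≤ ε^3 := by positivity
    have p4' : 0 ≤ ε^4 := by positivity
    nlinarith [p3, p4, p5, p6, p7, p2, p3', p4']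
  have hsum : x + x^2/2 + x^3 * (2/9) ≤ ε := by
    rw [hxq, show (12*ε+ε^2+ε^3)/(12*(1+ε)) + ((12*ε+ε^2+ε^3)/(12*(1+ε)))^2/2
        + ((12*ε+ε^2+ε^3)/(12*(1+ε)))^3 * (2/9)
        = (18*(12*ε+ε^2+ε^3)*(12*(1+ε))^2 + 9*(12*ε+ε^2+ε^3)^2*(12*(1+ε))
          + 4*(12*ε+ε^2+ε^3)^3) / (18*(12*(1+ε))^3) by field_simp; ring,
      div_le_iff₀ (by positivity)]
    linarith [key]
  linarith

lemma scalar2 {ε : ℝ} (h0 : 0 < ε) (h1 : ε < 1) :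
    Real.exp (-(ε/(1-ε) - ε^2/12)) ≤ 1 - ε := by
  have hv : (0:ℝ) < 1 - ε := by linarith
  set w := ε/(1-ε) - ε^2/12 with hwdef
  have hw0 : 0 ≤ w := by
    have h2 : ε ≤ ε/(1-ε) := by
      rw [le_div_iff₀ hv]; nlinarith
    rw [hwdef]; nlinarith
  have hq : 1 + w + w^2/2 ≤ Real.exp w := by
    have h := Real.sum_le_exp_of_nonneg hw0 3
    have hs : ∑ i ∈ Finset.range 3, w ^ i / (Nat.factorial i) = 1 + w + w^2/2 := by
      norm_num [Finset.sum_range_succ, Nat.factorial]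
    linarith [hs ▸ h]
  have hpos : (0:ℝ) < 1 + w + w^2/2 := by positivity
  have hwq : w = (12*ε - (1-ε)*ε^2)/(12*(1-ε)) := by
    rw [hwdef]; field_simp
  have key : 1 ≤ (1-ε) * (1 + w + w^2/2) := by
    rw [hwq, show (1-ε) * (1 + (12*ε - (1-ε)*ε^2)/(12*(1-ε))
        + ((12*ε - (1-ε)*ε^2)/(12*(1-ε)))^2/2)
        = (288*(1-ε)^2 + 24*(1-ε)*(12*ε - (1-ε)*ε^2) + (12*ε - (1-ε)*ε^2)^2)
          / (288*(1-ε)) by field_simp; ring,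
      le_div_iff₀ (by positivity)]
    nlinarith [sq_nonneg (ε^2 - ε^3), sq_nonneg ε, pow_nonneg h0.le 3]
  rw [Real.exp_neg]
  calc (Real.exp w)⁻¹ ≤ (1 + w + w^2/2)⁻¹ := inv_anti₀ hpos hq
    _ ≤ 1 - ε := by
        rw [inv_le_comm₀ hpos hv, inv_eq_one_div, div_le_iff₀ hv]
        linarith [key]

lemma exp_lintegral (a t : ℝ) (ha : 0 < a) (ht : t < a) :
    ∫⁻ x, ENNReal.ofReal (Real.exp (t * x)) ∂(expMeasure a)
      = ENNReal.ofReal (a / (a - t)) := by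
  have hb : 0 < a - t := by linarith
  have hptw : ∀ x : ℝ, exponentialPDF a x * ENNReal.ofReal (Real.exp (t * x))
      = ENNReal.ofReal (a / (a - t)) * exponentialPDF (a - t) x := by
    intro x
    rw [exponentialPDF_eq, exponentialPDF_eq]
    by_cases hx : 0 ≤ x
    · rw [if_pos hx, if_pos hx, ← ENNReal.ofReal_mul (by positivity),
        ← ENNReal.ofReal_mul (by positivity)]
      congr 1
      rw [mul_assoc, ← Real.exp_add, show -(a * x) + t * x = -((a - t) * x) by ring,
        mul_comm (a/(a-t))]
      field_simp
    · rw [if_neg hx, if_neg hx]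
      simp
  have hmeas : Measurable (exponentialPDF a) := by
    exact (measurable_gammaPDFReal 1 a).ennreal_ofReal
  calc ∫⁻ x, ENNReal.ofReal (Real.exp (t * x)) ∂(expMeasure a)
      = ∫⁻ x, exponentialPDF a x * ENNReal.ofReal (Real.exp (t * x)) := by
        rw [show expMeasure a = MeasureTheory.volume.withDensity (exponentialPDF a) from rfl,
          lintegral_withDensity_eq_lintegral_mul _ hmeas
            (by exact (measurable_const.mul measurable_id).exp.ennreal_ofReal)]
        rfl
    _ = ∫⁻ x, ENNReal.ofReal (a / (a - t)) * exponentialPDF (a - t) x := by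
        simp_rw [hptw]
    _ = ENNReal.ofReal (a / (a - t)) := by
        rw [lintegral_const_mul _ (by exact (measurable_gammaPDFReal 1 (a-t)).ennreal_ofReal),
          lintegral_exponentialPDF_eq_one hb, mul_one]

variable {Ω : Type*} [MeasurableSpace Ω] {μ : Measure Ω} [IsProbabilityMeasure μ]

lemma map_eq_expMeasure {a : ℝ} (ha : 0 < a) {X : Ω → ℝ} (hX : Measurable X)
    (hnn : ∀ ω, 0 ≤ X ω)
    (hsurv : ∀ t, 0 ≤ t → μ {ω | t < X ω} = ENNReal.ofReal (Real.exp (-(a * t)))) :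
    μ.map X = expMeasure a := by
  have h1 : IsProbabilityMeasure (μ.map X) := Measure.isProbabilityMeasure_map hX.aemeasurable
  have h2 : IsProbabilityMeasure (expMeasure a) := isProbabilityMeasure_expMeasure ha
  refine MeasureTheory.Measure.ext_of_Iic _ _ (fun x => ?_)
  rw [Measure.map_apply hX measurableSet_Iic,
    show expMeasure a = MeasureTheory.volume.withDensity (exponentialPDF a) from rfl,
    withDensity_apply _ measurableSet_Iic, lintegral_exponentialPDF_eq_antiDeriv ha x]
  by_cases hx : 0 ≤ x
  · rw [if_pos hx]
    have hset : X ⁻¹' Set.Iic x = {ω | x < X ω}ᶜ := by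
      ext ω; simp [Set.mem_setOf_eq, not_lt]
    rw [hset, measure_compl (measurableSet_lt measurable_const hX) (measure_ne_top _ _),
      hsurv x hx, measure_univ, ← ENNReal.ofReal_one,
      ← ENNReal.ofReal_sub _ (Real.exp_pos _).le]
  · rw [if_neg hx]
    have hset : X ⁻¹' Set.Iic x = ∅ := by
      ext ω
      simp only [Set.mem_preimage, Set.mem_Iic, Set.mem_empty_iff_false, iff_false, not_le]
      exact lt_of_lt_of_le (lt_of_not_ge hx) (hnn ω)
    simp [hset]

omit [IsProbabilityMeasure μ] in
lemma exp_mul_integrable_and_mgf {a : ℝ} (ha : 0 < a) {X : Ω → ℝ} (hX : Measurable X)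
    (hmap : μ.map X = expMeasure a) {t : ℝ} (ht : t < a) :
    Integrable (fun ω => Real.exp (t * X ω)) μ ∧ mgf X μ t = a / (a - t) := by
  have hb : 0 < a - t := by linarith
  have hg : Measurable fun x : ℝ => ENNReal.ofReal (Real.exp (t * x)) :=
    (measurable_const.mul measurable_id).exp.ennreal_ofReal
  have hlint : ∫⁻ ω, ENNReal.ofReal (Real.exp (t * X ω)) ∂μ = ENNReal.ofReal (a / (a - t)) := by
    rw [← lintegral_map hg hX, hmap, exp_lintegral a t ha ht]
  have hint : Integrable (fun ω => Real.exp (t * X ω)) μ := by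
    refine ⟨((hX.const_mul t).exp).aestronglyMeasurable, ?_⟩
    rw [hasFiniteIntegral_iff_ofReal (ae_of_all _ fun ω => (Real.exp_pos _).le), hlint]
    exact ENNReal.ofReal_lt_top
  refine ⟨hint, ?_⟩
  rw [mgf, integral_eq_lintegral_of_nonneg_ae (ae_of_all _ fun ω => (Real.exp_pos _).le)
    ((hX.const_mul t).exp).aestronglyMeasurable, hlint,
    ENNReal.toReal_ofReal (by positivity)]

end Aux

/-- **Relative-error bound for the reciprocal of the empirical mean of i.i.d.
exponentials (inequality (2) of the paper).**
Let `Z 1, …, Z r₂` be i.i.d. exponential random variables with rate `a > 0`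
(characterised by the survival function `P(Z j > t) = exp(-a t)` for `t ≥ 0`),
and let `Z̄ ω = (1/r₂) ∑ j, Z j ω`.  Then for every `0 < ε₂ ≤ 1`,
`P((1-ε₂) a ≤ 1/Z̄ ≤ (1+ε₂) a) ≥ 1 - 2 exp(-ε₂² r₂ / 12)`. -/
theorem inv_exp_mean_concentration
    {Ω : Type*} [MeasurableSpace Ω] (μ : Measure Ω) [IsProbabilityMeasure μ]
    (r₂ : ℕ) (hr₂ : 0 < r₂) (a : ℝ) (ha : 0 < a)
    (Z : Fin r₂ → Ω → ℝ)
    (hmeas : ∀ j, Measurable (Z j))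
    (hnonneg : ∀ j ω, 0 ≤ Z j ω)
    (hindep : iIndepFun Z μ)
    (hsurv : ∀ j t, 0 ≤ t →
      μ {ω | t < Z j ω} = ENNReal.ofReal (Real.exp (-(a * t))))
    (ε₂ : ℝ) (hε₂ : 0 < ε₂) (hε₂' : ε₂ ≤ 1) :
    1 - 2 * Real.exp (-(ε₂ ^ 2 * r₂) / 12) ≤
      (μ {ω | (1 - ε₂) * a ≤ ((1 / r₂) * ∑ j, Z j ω)⁻¹ ∧
              ((1 / r₂) * ∑ j, Z j ω)⁻¹ ≤ (1 + ε₂) * a}).toReal := by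
  classical
  have hc0 : (0:ℝ) < (r₂ : ℝ) := by exact_mod_cast hr₂
  have hu : (0:ℝ) < 1 + ε₂ := by linarith
  -- mgf facts
  have hmap : ∀ j, μ.map (Z j) = expMeasure a := fun j =>
    map_eq_expMeasure ha (hmeas j) (hnonneg j) (hsurv j)
  have hZint : ∀ (t : ℝ), t < a → ∀ j, Integrable (fun ω => Real.exp (t * Z j ω)) μ :=
    fun t ht j => (exp_mul_integrable_and_mgf ha (hmeas j) (hmap j) ht).1
  have hZmgf : ∀ (t : ℝ), t < a → ∀ j, mgf (Z j) μ t = a / (a - t) :=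
    fun t ht j => (exp_mul_integrable_and_mgf ha (hmeas j) (hmap j) ht).2
  have hSint : ∀ (t : ℝ), t < a →
      Integrable (fun ω => Real.exp (t * (∑ j, Z j) ω)) μ := fun t ht =>
    hindep.integrable_exp_mul_sum hmeas (fun j _ => hZint t ht j)
  have hSmgf : ∀ (t : ℝ), t < a → mgf (∑ j, Z j) μ t = (a / (a - t)) ^ r₂ := by
    intro t ht
    rw [hindep.mgf_sum hmeas univ]
    simp [hZmgf t ht, Finset.prod_const, div_pow]
  set E : ℝ := Real.exp (-(ε₂ ^ 2 * r₂) / 12) with hE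
  have hE0 : 0 ≤ E := (Real.exp_pos _).le
  have hEpow : E = (Real.exp (-(ε₂^2/12))) ^ r₂ := by
    rw [hE, ← Real.exp_nat_mul]
    congr 1
    push_cast
    ring
  -- lower tail bound
  set s₁ : ℝ := (r₂ : ℝ) / (a * (1 + ε₂)) with hs₁
  have hs₁0 : 0 < s₁ := by positivity
  have boundA : (μ {ω | (∑ j, Z j) ω ≤ s₁}).toReal ≤ E := by
    have ht₁ : -(a * ε₂) < a := by nlinarith
    have h := measure_le_le_exp_mul_mgf (μ := μ) (X := ∑ j, Z j) s₁
      (t := -(a * ε₂)) (by nlinarith) (hSint _ ht₁)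
    rw [hSmgf _ ht₁] at h
    refine h.trans ?_
    have e1 : a / (a - -(a * ε₂)) = 1 / (1 + ε₂) := by
      rw [show a - -(a * ε₂) = a * (1 + ε₂) by ring,
        div_eq_div_iff (by positivity) (by positivity)]
      ring
    have e2 : - -(a * ε₂) * s₁ = (r₂ : ℝ) * (ε₂ / (1 + ε₂)) := by
      rw [hs₁]
      field_simp
    rw [e1, e2, Real.exp_nat_mul, ← mul_pow, hEpow]
    apply pow_le_pow_left₀ (by positivity)
    have hsc := scalar1 hε₂ hε₂'
    have key : Real.exp (ε₂/(1+ε₂)) * (1/(1+ε₂))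
        = Real.exp (ε₂/(1+ε₂) + ε₂^2/12) / (1+ε₂) * Real.exp (-(ε₂^2/12)) := by
      rw [div_mul_eq_mul_div, ← Real.exp_add,
        show ε₂/(1+ε₂) + ε₂^2/12 + -(ε₂^2/12) = ε₂/(1+ε₂) by ring, mul_one_div]
    rw [key]
    have h1 : Real.exp (ε₂/(1+ε₂) + ε₂^2/12) / (1+ε₂) ≤ 1 := (div_le_one hu).mpr hsc
    calc Real.exp (ε₂/(1+ε₂) + ε₂^2/12) / (1+ε₂) * Real.exp (-(ε₂^2/12))
        ≤ 1 * Real.exp (-(ε₂^2/12)) :=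
          mul_le_mul_of_nonneg_right h1 (Real.exp_pos _).le
      _ = Real.exp (-(ε₂^2/12)) := one_mul _
  -- the good event
  set G : Set Ω := {ω | (1 - ε₂) * a ≤ ((1 / r₂) * ∑ j, Z j ω)⁻¹ ∧
              ((1 / r₂) * ∑ j, Z j ω)⁻¹ ≤ (1 + ε₂) * a} with hG
  have hSmeas : Measurable (fun ω => ∑ j, Z j ω) :=
    Finset.measurable_sum univ (fun j _ => hmeas j)
  have hfmeas : Measurable (fun ω => ((1 / (r₂:ℝ)) * ∑ j, Z j ω)⁻¹) :=
    (measurable_const.mul hSmeas).inv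
  have hGmeas : MeasurableSet G := by
    rw [hG, Set.setOf_and]
    exact (measurableSet_le measurable_const hfmeas).inter
      (measurableSet_le hfmeas measurable_const)
  -- membership facts
  have hmem : ∀ ω, s₁ < (∑ j, Z j) ω →
      (0 < (1 / (r₂:ℝ)) * ∑ j, Z j ω ∧
        ((1 / (r₂:ℝ)) * ∑ j, Z j ω)⁻¹ ≤ (1 + ε₂) * a) := by
    intro ω hω
    rw [Finset.sum_apply] at hω
    have hm : 1 / (a * (1 + ε₂)) < (1 / (r₂:ℝ)) * ∑ j, Z j ω := by
      rw [one_div_mul_eq_div, lt_div_iff₀ hc0]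
      have e3 : (1:ℝ) / (a * (1 + ε₂)) * (r₂:ℝ) = s₁ := by rw [hs₁]; ring
      rw [e3]; exact hω
    have hk : (0:ℝ) < 1 / (a * (1 + ε₂)) := by positivity
    refine ⟨hk.trans hm, ?_⟩
    have h2 : ((1 / (r₂:ℝ)) * ∑ j, Z j ω)⁻¹ ≤ (1 / (a * (1 + ε₂)))⁻¹ :=
      inv_anti₀ hk hm.le
    rw [one_div (a * (1 + ε₂)), inv_inv] at h2
    linarith [h2, mul_comm a (1 + ε₂)]
  have hcompl : (μ G).toReal = 1 - (μ Gᶜ).toReal := by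
    have h := measure_compl hGmeas (measure_ne_top μ G)
    rw [measure_univ] at h
    have h2 : (μ Gᶜ).toReal = 1 - (μ G).toReal := by
      rw [h, ENNReal.toReal_sub_of_le prob_le_one ENNReal.one_ne_top, ENNReal.toReal_one]
    linarith
  by_cases hε1 : ε₂ < 1
  · -- also need the upper tail bound
    have hv : (0:ℝ) < 1 - ε₂ := by linarith
    set s₂ : ℝ := (r₂ : ℝ) / (a * (1 - ε₂)) with hs₂
    have boundB : (μ {ω | s₂ ≤ (∑ j, Z j) ω}).toReal ≤ E := by
      have ht₂ : a * ε₂ < a := by nlinarith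
      have h := measure_ge_le_exp_mul_mgf (μ := μ) (X := ∑ j, Z j) s₂
        (t := a * ε₂) (by positivity) (hSint _ ht₂)
      rw [hSmgf _ ht₂] at h
      refine h.trans ?_
      have e1 : a / (a - a * ε₂) = 1 / (1 - ε₂) := by
        rw [show a - a * ε₂ = a * (1 - ε₂) by ring,
          div_eq_div_iff (by positivity) (by positivity)]
        ring
      have e2 : -(a * ε₂) * s₂ = (r₂ : ℝ) * (-(ε₂ / (1 - ε₂))) := by
        rw [hs₂]
        field_simp
      rw [e1, e2, Real.exp_nat_mul, ← mul_pow, hEpow]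
      apply pow_le_pow_left₀ (by positivity)
      have hsc := scalar2 hε₂ hε1
      have key : Real.exp (-(ε₂/(1-ε₂))) * (1/(1-ε₂))
          = Real.exp (-(ε₂/(1-ε₂) - ε₂^2/12)) / (1-ε₂) * Real.exp (-(ε₂^2/12)) := by
        rw [div_mul_eq_mul_div, ← Real.exp_add,
          show -(ε₂/(1-ε₂) - ε₂^2/12) + -(ε₂^2/12) = -(ε₂/(1-ε₂)) by ring, mul_one_div]
      rw [key]
      have h1 : Real.exp (-(ε₂/(1-ε₂) - ε₂^2/12)) / (1-ε₂) ≤ 1 := (div_le_one hv).mpr hsc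
      calc Real.exp (-(ε₂/(1-ε₂) - ε₂^2/12)) / (1-ε₂) * Real.exp (-(ε₂^2/12))
          ≤ 1 * Real.exp (-(ε₂^2/12)) :=
            mul_le_mul_of_nonneg_right h1 (Real.exp_pos _).le
        _ = Real.exp (-(ε₂^2/12)) := one_mul _
    have hsub : Gᶜ ⊆ {ω | (∑ j, Z j) ω ≤ s₁} ∪ {ω | s₂ ≤ (∑ j, Z j) ω} := by
      intro ω hω
      by_contra hcon
      rw [Set.mem_union] at hcon
      push_neg at hcon
      obtain ⟨h1', h2'⟩ := hcon
      rw [Set.mem_setOf_eq, not_le] at h1'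
      rw [Set.mem_setOf_eq, not_le] at h2'
      obtain ⟨hm0, hup⟩ := hmem ω h1'
      apply hω
      rw [hG, Set.mem_setOf_eq]
      refine ⟨?_, hup⟩
      -- lower bound part
      rw [Finset.sum_apply] at h2'
      have hmlt : (1 / (r₂:ℝ)) * ∑ j, Z j ω < 1 / (a * (1 - ε₂)) := by
        rw [one_div_mul_eq_div, div_lt_iff₀ hc0]
        have e3 : (1:ℝ) / (a * (1 - ε₂)) * (r₂:ℝ) = s₂ := by rw [hs₂]; ring
        rw [e3]; exact h2'
      have h3 : (1 / (a * (1 - ε₂)))⁻¹ ≤ ((1 / (r₂:ℝ)) * ∑ j, Z j ω)⁻¹ :=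
        inv_anti₀ hm0 hmlt.le
      rw [one_div (a * (1 - ε₂)), inv_inv] at h3
      linarith [h3, mul_comm a (1 - ε₂)]
    have hμc : (μ Gᶜ).toReal ≤ 2 * E := by
      calc (μ Gᶜ).toReal
          ≤ (μ ({ω | (∑ j, Z j) ω ≤ s₁} ∪ {ω | s₂ ≤ (∑ j, Z j) ω})).toReal :=
            ENNReal.toReal_mono (measure_ne_top μ _) (measure_mono hsub)
        _ ≤ (μ {ω | (∑ j, Z j) ω ≤ s₁} + μ {ω | s₂ ≤ (∑ j, Z j) ω}).toReal :=
            ENNReal.toReal_mono (by finiteness) (measure_union_le _ _)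
        _ = (μ {ω | (∑ j, Z j) ω ≤ s₁}).toReal + (μ {ω | s₂ ≤ (∑ j, Z j) ω}).toReal :=
            ENNReal.toReal_add (measure_ne_top _ _) (measure_ne_top _ _)
        _ ≤ 2 * E := by linarith [boundA, boundB]
    rw [hcompl]
    linarith
  · -- ε₂ = 1
    have hε1' : ε₂ = 1 := le_antisymm hε₂' (not_lt.mp hε1)
    have hsub : Gᶜ ⊆ {ω | (∑ j, Z j) ω ≤ s₁} := by
      intro ω hω
      by_contra hcon
      rw [Set.mem_setOf_eq, not_le] at hcon
      obtain ⟨hm0, hup⟩ := hmem ω hcon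
      apply hω
      rw [hG, Set.mem_setOf_eq]
      refine ⟨?_, hup⟩
      rw [hε1']
      simp only [sub_self, zero_mul]
      positivity
    have hμc : (μ Gᶜ).toReal ≤ E :=
      (ENNReal.toReal_mono (measure_ne_top μ _) (measure_mono hsub)).trans boundA
    rw [hcompl]
    linarith
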